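/- arXiv:2003.11792 — 5 statements merged into one kernel-verified Lean document; each statement's English description precedes it below -/
import Mathlib

section
/- Let G = (V, E, m) be a Klaus-sparse weighted graph, let k ∈ J and λ ∈ ℝ. Assume there exist finitely supported φ_n : V_{∞,k} → ℂ with ‖φ_n‖_{ℓ²_{m_{∞,k}}(V_{∞,k})} = 1 and ‖Δ_{G_{∞,k}} φ_n − λ φ_n‖ → 0 as n → ∞. Then there exist finitely supported ψ_n : V → ℂ with ‖ψ_n‖_{ℓ²_m(V)} = 1, with pairwise disjoint supports (in particular, for every finite K ⊂ V the support of ψ_n is disjoint from K for all sufficiently large n), and with ‖Δ_G ψ_n − λ ψ_n‖_{ℓ²_m(V)} → 0 as n → ∞. -/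
open scoped BigOperators

/-- A weighted graph: symmetric nonnegative edge weights with no loops,
locally finite, with a positive vertex weight. -/
structure WeightedGraph (V : Type) where
  E : V → V → ℝ
  m : V → ℝ
  E_symm : ∀ x y, E x y = E y x
  E_nonneg : ∀ x y, 0 ≤ E x y
  E_diag : ∀ x, E x x = 0
  locFin : ∀ x, {y | E x y ≠ 0}.Finite
  m_pos : ∀ x, 0 < m x

namespace WeightedGraph

variable {V : Type}

/-- The underlying simple graph. -/
def toSimpleGraph (G : WeightedGraph V) : SimpleGraph V where
  Adj x y := x ≠ y ∧ G.E x y ≠ 0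
  symm := by
    constructor
    intro x y h
    exact ⟨h.1.symm, by rw [G.E_symm]; exact h.2⟩
  loopless := by constructor; intro x h; exact h.1 rfl

/-- The weighted degree. -/
noncomputable def deg (G : WeightedGraph V) (x : V) : ℝ :=
  (G.m x)⁻¹ * ∑ᶠ y, G.E x y

/-- The combinatorial ball for the unweighted graph distance. -/
def ball (G : WeightedGraph V) (x : V) (r : ℕ) : Set V :=
  {y | G.toSimpleGraph.dist x y ≤ r}

lemma center_mem_ball (G : WeightedGraph V) (x : V) (r : ℕ) : x ∈ G.ball x r := by
  simp [ball, SimpleGraph.dist_self]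

/-- The induced weighted graph on a subset of the vertices. -/
def induce (G : WeightedGraph V) (X : Set V) : WeightedGraph X where
  E a b := G.E a b
  m a := G.m a
  E_symm a b := G.E_symm a b
  E_nonneg a b := G.E_nonneg a b
  E_diag a := G.E_diag a
  locFin a := Set.Finite.preimage (Subtype.coe_injective.injOn) (G.locFin a)
  m_pos a := G.m_pos a

/-- The graph Laplacian, acting on arbitrary functions (pointwise well defined by
local finiteness). -/
noncomputable def lapl (G : WeightedGraph V) (f : V → ℂ) : V → ℂ := fun x =>
  (G.m x : ℂ)⁻¹ * ∑ᶠ y, (G.E x y : ℂ) * (f x - f y)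

/-- The square of the `ℓ²_m` norm. -/
noncomputable def normSq (G : WeightedGraph V) (f : V → ℂ) : ℝ :=
  ∑ᶠ x, G.m x * ‖f x‖ ^ 2

/-- The `ℓ²_m` norm. -/
noncomputable def wnorm (G : WeightedGraph V) (f : V → ℂ) : ℝ :=
  Real.sqrt (G.normSq f)

/-- The quadratic form of the Laplacian. -/
noncomputable def quadForm (G : WeightedGraph V) (f : V → ℂ) : ℝ :=
  (1 / 2) * ∑ᶠ x, ∑ᶠ y, G.E x y * ‖f x - f y‖ ^ 2

end WeightedGraph

/-- An embedding of weighted graphs (injective, preserving edge weights and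
vertex weights). -/
structure GraphEmbedding {V₁ V₂ : Type} (G₁ : WeightedGraph V₁) (G₂ : WeightedGraph V₂) where
  toFun : V₁ → V₂
  inj : Function.Injective toFun
  mapE : ∀ x y, G₁.E x y = G₂.E (toFun x) (toFun y)
  mapm : ∀ x, G₁.m x = G₂.m (toFun x)

/-- A pointed embedding of pointed weighted graphs. -/
structure PointedEmbedding {V₁ V₂ : Type} (G₁ : WeightedGraph V₁) (x₁ : V₁)
    (G₂ : WeightedGraph V₂) (x₂ : V₂) extends GraphEmbedding G₁ G₂ where
  base : toFun x₁ = x₂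

/-- Condition (c) of the definition of a Klaus-sparse graph: the connected components of
the graph induced on `S` carry base points and a total order along which they embed into
each other, and they all embed into the medium graph `(GM, xM)`. -/
def CompCondition {V VM : Type} (G : WeightedGraph V) (GM : WeightedGraph VM) (xM : VM)
    (S : Set V) : Prop :=
  ∃ (pt : ∀ c : ((G.induce S).toSimpleGraph).ConnectedComponent, {v : S // v ∈ c.supp})
    (ord : ((G.induce S).toSimpleGraph).ConnectedComponent →
      ((G.induce S).toSimpleGraph).ConnectedComponent → Prop),
    (∀ c c', ord c c' ∨ ord c' c) ∧
    (∀ c c', ord c c' →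
      Nonempty (PointedEmbedding ((G.induce S).induce c.supp) ⟨(pt c).1, (pt c).2⟩
        ((G.induce S).induce c'.supp) ⟨(pt c').1, (pt c').2⟩)) ∧
    (∀ c, Nonempty (PointedEmbedding ((G.induce S).induce c.supp) ⟨(pt c).1, (pt c).2⟩ GM xM))

/-- The definition of a Klaus-sparse graph (Definition 2.1 of the paper), bundled as the
data of the patterns, the localisations at infinity, the medium graph, and the
compatibility conditions (a)-(e). -/
structure KlausSparse {V : Type} (G : WeightedGraph V) where
  /-- The graph itself is connected. -/
  conn : G.toSimpleGraph.Connected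
  /-- The index set of the patterns. -/
  J : Type
  countJ : Countable J
  nonemptyJ : Nonempty J
  /-- The centers `x_{i,k}`. -/
  center : ℕ × J → V
  /-- The interior radii `r^int_{i,k}`. -/
  rint : ℕ × J → ℕ
  /-- The exterior radii `r^ext_{i,k}`. -/
  rext : ℕ × J → ℕ
  rint_pos : ∀ p, 0 < rint p
  rint_lt_rext : ∀ p, rint p < rext p
  /-- (a): `r^int → ∞` along the cofinite filter. -/
  rint_tendsto : Filter.Tendsto rint Filter.cofinite Filter.atTop
  /-- (a): `r^ext - r^int → ∞` along the cofinite filter. -/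
  gap_tendsto : Filter.Tendsto (fun p => rext p - rint p) Filter.cofinite Filter.atTop
  /-- The vertex sets of the localisations at infinity. -/
  Vinf : J → Type
  /-- The localisations at infinity. -/
  Ginf : ∀ k, WeightedGraph (Vinf k)
  /-- Their base points. -/
  xinf : ∀ k, Vinf k
  Ginf_conn : ∀ k, (Ginf k).toSimpleGraph.Connected
  /-- The vertex set of the medium graph. -/
  VM : Type
  /-- The medium graph. -/
  GM : WeightedGraph VM
  /-- Its base point. -/
  xM : VM
  /-- The medium graph has uniformly bounded degree. -/
  degM_bdd : ∃ D : ℝ, ∀ y, GM.deg y ≤ D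
  /-- (b), first half: each exterior ball embeds in the corresponding localisation
  at infinity. -/
  emb_ext : ∀ p : ℕ × J,
    Nonempty (PointedEmbedding (G.induce (G.ball (center p) (rext p)))
      ⟨center p, G.center_mem_ball _ _⟩ (Ginf p.2) (xinf p.2))
  /-- (b), second half: each ball of the localisation at infinity embeds back in some
  interior ball. -/
  emb_int : ∀ (r : ℕ) (k : J), ∃ i : ℕ,
    Nonempty (PointedEmbedding ((Ginf k).induce ((Ginf k).ball (xinf k) r))
      ⟨xinf k, (Ginf k).center_mem_ball _ _⟩
      (G.induce (G.ball (center (i, k)) (rint (i, k) - 1)))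
      ⟨center (i, k), G.center_mem_ball _ _⟩)
  /-- (c): the connected components of the complement of the interior balls. -/
  comp_cond : CompCondition G GM xM ((⋃ p : ℕ × J, G.ball (center p) (rint p - 1))ᶜ)
  /-- (d): the exterior balls are pairwise disjoint. -/
  disj : ∀ p q : ℕ × J, p ≠ q →
    Disjoint (G.ball (center p) (rext p)) (G.ball (center q) (rext q))
  /-- (e): arbitrarily large balls of the medium graph embed in annuli of the patterns. -/
  emb_med : ∀ r : ℕ, ∃ p : ℕ × J,
    Nonempty (GraphEmbedding (GM.induce (GM.ball xM r))
      (G.induce (G.ball (center p) (rext p - 1) \ G.ball (center p) (rint p + 1))))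

section Helpers

open Function Set

lemma finsum_comp_inj {M : Type*} [AddCommMonoid M] {α β : Type*} {u : α → β}
    (hu : Function.Injective u) (F : β → M) (h : Function.support F ⊆ Set.range u) :
    ∑ᶠ y, F y = ∑ᶠ a, F (u a) := by
  rw [← finsum_mem_range hu, finsum_mem_def, Set.indicator_eq_self.2 h]

namespace WeightedGraph

variable {V : Type}

lemma adj_of_E_ne (G : WeightedGraph V) {x y : V} (h : G.E x y ≠ 0) :
    G.toSimpleGraph.Adj x y :=
  ⟨by rintro rfl; exact h (G.E_diag x), h⟩

lemma dist_le_one_of_E (G : WeightedGraph V) {x y : V} (h : G.E x y ≠ 0) :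
    G.toSimpleGraph.dist x y ≤ 1 := by
  simpa using SimpleGraph.dist_le (SimpleGraph.Walk.cons (G.adj_of_E_ne h) SimpleGraph.Walk.nil)

lemma mem_ball_iff (G : WeightedGraph V) {x y : V} {r : ℕ} :
    y ∈ G.ball x r ↔ G.toSimpleGraph.dist x y ≤ r := Iff.rfl

lemma ball_mono (G : WeightedGraph V) (x : V) {r r' : ℕ} (h : r ≤ r') :
    G.ball x r ⊆ G.ball x r' := fun _ hy => le_trans hy h

lemma exists_walk_getVert_le {G : SimpleGraph V} {a b : V} (w : G.Walk a b) :
    ∀ i : ℕ, ∃ w' : G.Walk a (w.getVert i), w'.length ≤ i := by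
  induction w with
  | nil => intro i; exact ⟨SimpleGraph.Walk.nil, by simp⟩
  | cons h p ih =>
    intro i
    cases i with
    | zero => exact ⟨SimpleGraph.Walk.nil.copy rfl (by simp), by simp⟩
    | succ n =>
      obtain ⟨w', hw'⟩ := ih n
      refine ⟨(SimpleGraph.Walk.cons h w').copy rfl
        (by rw [SimpleGraph.Walk.getVert_cons_succ]), ?_⟩
      simpa using Nat.succ_le_succ hw'

lemma exists_walk_from_getVert {G : SimpleGraph V} {a b : V} (w : G.Walk a b) :
    ∀ i : ℕ, ∃ w' : G.Walk (w.getVert i) b, w'.length ≤ w.length - i := by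
  induction w with
  | nil => intro i; exact ⟨SimpleGraph.Walk.nil.copy rfl rfl, by simp⟩
  | cons h p ih =>
    intro i
    cases i with
    | zero =>
      exact ⟨(SimpleGraph.Walk.cons h p).copy (by simp) rfl, by simp⟩
    | succ n =>
      obtain ⟨w', hw'⟩ := ih n
      refine ⟨w'.copy (by rw [SimpleGraph.Walk.getVert_cons_succ]) rfl, ?_⟩
      simpa using le_trans hw' (by omega)

lemma dist_getVert_le {G : SimpleGraph V} {a b : V} (w : G.Walk a b) (i : ℕ) :
    G.dist a (w.getVert i) ≤ i := by
  obtain ⟨w', hw'⟩ := exists_walk_getVert_le w i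
  exact le_trans (SimpleGraph.dist_le w') hw'

lemma dist_getVert_right_le {G : SimpleGraph V} {a b : V} (w : G.Walk a b) (i : ℕ) :
    G.dist (w.getVert i) b ≤ w.length - i := by
  obtain ⟨w', hw'⟩ := exists_walk_from_getVert w i
  exact le_trans (SimpleGraph.dist_le w') hw'

lemma ball_finite (G : WeightedGraph V) (hc : G.toSimpleGraph.Connected) (x : V) :
    ∀ r : ℕ, (G.ball x r).Finite := by
  intro r
  induction r with
  | zero =>
    refine Set.Finite.subset (Set.finite_singleton x) ?_
    intro y hy
    have h0 : G.toSimpleGraph.dist x y = 0 := Nat.le_zero.mp hy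
    exact (hc.dist_eq_zero_iff.mp h0).symm
  | succ r ih =>
    refine Set.Finite.subset (ih.union (ih.biUnion (fun z _ => G.locFin z))) ?_
    intro y hy
    rcases Nat.lt_or_ge (G.toSimpleGraph.dist x y) (r + 1) with hlt | hge
    · exact Or.inl (Nat.lt_succ_iff.mp hlt)
    · have hd : G.toSimpleGraph.dist x y = r + 1 := le_antisymm hy hge
      obtain ⟨w, hw⟩ := hc.exists_walk_length_eq_dist x y
      have hz : w.getVert r ∈ G.ball x r := dist_getVert_le w r
      have hadj : G.toSimpleGraph.Adj (w.getVert r) y := by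
        have hlen : r < w.length := by omega
        have := w.adj_getVert_succ hlen
        rwa [show w.getVert (r + 1) = y by
          rw [show r + 1 = w.length by omega, SimpleGraph.Walk.getVert_length]] at this
      exact Or.inr (Set.mem_biUnion hz hadj.2)

lemma exists_dist_eq (G : WeightedGraph V) (hc : G.toSimpleGraph.Connected) [Infinite V]
    (x : V) (r : ℕ) : ∃ y, G.toSimpleGraph.dist x y = r := by
  obtain ⟨y, hy⟩ := (G.ball_finite hc x r).infinite_compl.nonempty
  have hgt : r < G.toSimpleGraph.dist x y := Nat.lt_of_not_le hy
  obtain ⟨w, hw⟩ := hc.exists_walk_length_eq_dist x y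
  refine ⟨w.getVert r, le_antisymm (dist_getVert_le w r) ?_⟩
  have h1 := hc.dist_triangle (u := x) (v := w.getVert r) (w := y)
  have h2 := dist_getVert_right_le w r
  omega

lemma card_ball_ge (G : WeightedGraph V) (hc : G.toSimpleGraph.Connected) [Infinite V]
    (x : V) (r : ℕ) : r + 1 ≤ Nat.card (G.ball x r) := by
  haveI := (G.ball_finite hc x r).to_subtype
  have h : ∀ d : Fin (r + 1), ∃ y : G.ball x r, G.toSimpleGraph.dist x ↑y = (d : ℕ) := by
    intro d
    obtain ⟨y, hy⟩ := G.exists_dist_eq hc x d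
    exact ⟨⟨y, by simp only [mem_ball_iff, hy]; omega⟩, hy⟩
  choose g hg using h
  have hginj : Function.Injective g := by
    intro d d' hEq
    apply Fin.ext
    rw [← hg d, ← hg d', hEq]
  calc r + 1 = Nat.card (Fin (r + 1)) := by simp
    _ ≤ Nat.card (G.ball x r) := Nat.card_le_card_of_injective g hginj

lemma lift_walk (G : WeightedGraph V) {X : Set V} {a b : V}
    (w : G.toSimpleGraph.Walk a b) (ha : a ∈ X) (hb : b ∈ X)
    (hsupp : ∀ u ∈ w.support, u ∈ X) :
    ∃ w' : (G.induce X).toSimpleGraph.Walk ⟨a, ha⟩ ⟨b, hb⟩, w'.length = w.length := by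
  induction w with
  | nil => exact ⟨SimpleGraph.Walk.nil, rfl⟩
  | @cons u c b h p ih =>
    have hcX : c ∈ X := hsupp c (by simp [SimpleGraph.Walk.support_cons])
    obtain ⟨w', hl⟩ := ih hcX hb (fun z hz => hsupp z (by simp [SimpleGraph.Walk.support_cons, hz]))
    have hadj : (G.induce X).toSimpleGraph.Adj ⟨u, ha⟩ ⟨c, hcX⟩ :=
      ⟨fun hEq => h.1 (congrArg Subtype.val hEq), h.2⟩
    refine ⟨SimpleGraph.Walk.cons hadj w', ?_⟩
    simp [hl]

lemma map_walk {V₁ V₂ : Type} (G₁ : WeightedGraph V₁) (G₂ : WeightedGraph V₂)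
    (f : V₁ → V₂) (hinj : Function.Injective f)
    (hE : ∀ a b, G₂.E (f a) (f b) = G₁.E a b) {a b : V₁}
    (w : G₁.toSimpleGraph.Walk a b) :
    ∃ w' : G₂.toSimpleGraph.Walk (f a) (f b), w'.length = w.length := by
  let F : G₁.toSimpleGraph →g G₂.toSimpleGraph :=
    ⟨f, fun {x y} h => ⟨fun hEq => h.1 (hinj hEq), by rw [hE]; exact h.2⟩⟩
  exact ⟨w.map F, SimpleGraph.Walk.length_map F w⟩

lemma lapl_eq_zero (G : WeightedGraph V) {f : V → ℂ} {x : V} (h0 : f x = 0)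
    (h : ∀ y, G.E x y ≠ 0 → f y = 0) : G.lapl f x = 0 := by
  have hz : (fun y => (G.E x y : ℂ) * (f x - f y)) = fun _ => 0 := by
    funext y
    by_cases hE : G.E x y = 0
    · simp [hE]
    · simp [h y hE, h0]
  simp only [lapl, hz, finsum_zero, mul_zero]

lemma normSq_transport {V₁ V₂ : Type} (G₁ : WeightedGraph V₁) (G₂ : WeightedGraph V₂)
    {A : Set V₁} {e : A → V₂} (he : Function.Injective e)
    (hm : ∀ a : A, G₂.m (e a) = G₁.m ↑a)
    {f : V₁ → ℂ} {g : V₂ → ℂ}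
    (hf0 : ∀ x, x ∉ A → f x = 0) (hg0 : ∀ y, y ∉ Set.range e → g y = 0)
    (hfg : ∀ a : A, g (e a) = f ↑a) :
    G₂.normSq g = G₁.normSq f := by
  have h1 : Function.support (fun y => G₂.m y * ‖g y‖ ^ 2) ⊆ Set.range e := by
    intro y hy
    by_contra hyr
    exact hy (by simp [hg0 y hyr])
  have h2 : Function.support (fun x => G₁.m x * ‖f x‖ ^ 2) ⊆ Set.range (Subtype.val : A → V₁) := by
    intro x hx
    by_contra hxA
    rw [Subtype.range_coe] at hxA
    exact hx (by simp [hf0 x hxA])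
  rw [normSq, normSq, finsum_comp_inj he _ h1, finsum_comp_inj Subtype.coe_injective _ h2]
  exact finsum_congr fun a => by rw [hm a, hfg a]

end WeightedGraph

end Helpers

/-- If `lam` admits a normalized sequence of finitely supported approximate
eigenfunctions for the Laplacian of a localisation at infinity `G_{∞,k}` of a
Klaus-sparse graph `G`, then `lam` admits a normalized sequence of finitely supported
approximate eigenfunctions for `Δ_G` with pairwise disjoint supports (in particular the
supports eventually leave every finite set), i.e. `σ(Δ_{G_{∞,k}}) ⊆ σ_ess(Δ_G)`. -/
theorem spectrum_localisation_subset_essSpectrum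
    {V : Type} [Countable V] (G : WeightedGraph V) (KS : KlausSparse G)
    (k : KS.J) (lam : ℝ) (φ : ℕ → KS.Vinf k → ℂ)
    (hsupp : ∀ n, (Function.support (φ n)).Finite)
    (hnorm : ∀ n, (KS.Ginf k).wnorm (φ n) = 1)
    (hconv : Filter.Tendsto
      (fun n => (KS.Ginf k).wnorm (fun x => (KS.Ginf k).lapl (φ n) x - (lam : ℂ) * φ n x))
      Filter.atTop (nhds 0)) :
    ∃ ψ : ℕ → V → ℂ,
      (∀ n, (Function.support (ψ n)).Finite) ∧
      (∀ n, G.wnorm (ψ n) = 1) ∧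
      (Pairwise fun n n' => Disjoint (Function.support (ψ n)) (Function.support (ψ n'))) ∧
      (∀ K : Set V, K.Finite → ∀ᶠ n in Filter.atTop, Disjoint (Function.support (ψ n)) K) ∧
      Filter.Tendsto (fun n => G.wnorm (fun x => G.lapl (ψ n) x - (lam : ℂ) * ψ n x))
        Filter.atTop (nhds 0) := by
  classical
  have hGc := KS.conn
  have hHc := KS.Ginf_conn k
  -- V is infinite
  haveI hVinf : Infinite V := by
    refine Infinite.of_injective (fun n : ℕ => KS.center (n, k)) ?_
    intro n m hEq
    by_contra hne
    have hd := KS.disj (n, k) (m, k) (by simp [hne])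
    have h1 : KS.center (n, k) ∈ G.ball (KS.center (n, k)) (KS.rext (n, k)) :=
      G.center_mem_ball _ _
    have hEq' : KS.center (n, k) = KS.center (m, k) := hEq
    have h2 : KS.center (n, k) ∈ G.ball (KS.center (m, k)) (KS.rext (m, k)) := by
      rw [hEq']; exact G.center_mem_ball _ _
    exact Set.disjoint_left.mp hd h1 h2
  -- the localisation at infinity is infinite
  haveI hWinf : Infinite (KS.Vinf k) := by
    by_contra hfin
    haveI hF : Finite (KS.Vinf k) := not_infinite_iff_finite.mp hfin
    have hcof := KS.rint_tendsto.eventually_ge_atTop (Nat.card (KS.Vinf k) + 1)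
    rw [Filter.eventually_cofinite] at hcof
    have hinjk : Function.Injective (fun i : ℕ => ((i, k) : ℕ × KS.J)) :=
      fun a b h => congrArg Prod.fst h
    have hfin2 : ((fun i : ℕ => ((i, k) : ℕ × KS.J)) ⁻¹'
        {p | ¬ Nat.card (KS.Vinf k) + 1 ≤ KS.rint p}).Finite :=
      Set.Finite.preimage hinjk.injOn hcof
    obtain ⟨i, hi⟩ := hfin2.infinite_compl.nonempty
    have hrint : Nat.card (KS.Vinf k) + 1 ≤ KS.rint (i, k) := by simpa using hi
    obtain ⟨emb⟩ := KS.emb_ext (i, k)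
    have hcard1 : KS.rext (i, k) + 1 ≤
        Nat.card ↥(G.ball (KS.center (i, k)) (KS.rext (i, k))) :=
      G.card_ball_ge hGc _ _
    have hcard2 : Nat.card ↥(G.ball (KS.center (i, k)) (KS.rext (i, k)))
        ≤ Nat.card (KS.Vinf k) :=
      Nat.card_le_card_of_injective emb.toFun emb.inj
    have h3 := KS.rint_lt_rext (i, k)
    omega
  -- Core construction : one normalized copy avoiding a prescribed finite index set
  have core : ∀ (F : Finset ℕ) (f : KS.Vinf k → ℂ), (Function.support f).Finite →
      ∃ (i : ℕ) (ψ : V → ℂ), i ∉ F ∧ (Function.support ψ).Finite ∧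
        Function.support ψ ⊆ G.ball (KS.center (i, k)) (KS.rext (i, k)) ∧
        G.normSq ψ = (KS.Ginf k).normSq f ∧
        G.normSq (fun x => G.lapl ψ x - (lam : ℂ) * ψ x)
          = (KS.Ginf k).normSq (fun w => (KS.Ginf k).lapl f w - (lam : ℂ) * f w) := by
    intro F f hf
    obtain ⟨R, hR⟩ : ∃ R, ∀ w, f w ≠ 0 →
        (KS.Ginf k).toSimpleGraph.dist (KS.xinf k) w ≤ R :=
      ⟨hf.toFinset.sup ((KS.Ginf k).toSimpleGraph.dist (KS.xinf k)),
        fun w hw => Finset.le_sup (by simpa using hw)⟩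
    set s := max R (F.sup fun i' =>
      Nat.card ↥(G.ball (KS.center (i', k)) (KS.rint (i', k) - 1))) with hs
    have hRs : R ≤ s := le_max_left _ _
    have hfd : ∀ w, f w ≠ 0 →
        (KS.Ginf k).toSimpleGraph.dist (KS.xinf k) w ≤ s :=
      fun w hw => le_trans (hR w hw) hRs
    obtain ⟨i, ⟨ι⟩⟩ := KS.emb_int (s + 2) k
    have hic : i ∉ F := by
      intro hiF
      haveI : Finite ↥(G.ball (KS.center (i, k)) (KS.rint (i, k) - 1)) :=
        (G.ball_finite hGc _ _).to_subtype
      have h1 : (s + 2) + 1 ≤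
          Nat.card ↥((KS.Ginf k).ball (KS.xinf k) (s + 2)) :=
        (KS.Ginf k).card_ball_ge hHc _ _
      have h2 : Nat.card ↥((KS.Ginf k).ball (KS.xinf k) (s + 2)) ≤
          Nat.card ↥(G.ball (KS.center (i, k)) (KS.rint (i, k) - 1)) :=
        Nat.card_le_card_of_injective ι.toFun ι.inj
      have h3 : Nat.card ↥(G.ball (KS.center (i, k)) (KS.rint (i, k) - 1)) ≤ s := by
        calc Nat.card ↥(G.ball (KS.center (i, k)) (KS.rint (i, k) - 1))
            ≤ F.sup (fun i' => Nat.card ↥(G.ball (KS.center (i', k)) (KS.rint (i', k) - 1))) :=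
              Finset.le_sup (f := fun i' =>
                Nat.card ↥(G.ball (KS.center (i', k)) (KS.rint (i', k) - 1))) hiF
          _ ≤ s := le_max_right _ _
      omega
    obtain ⟨j⟩ := KS.emb_ext (i, k)
    have hX12 : G.ball (KS.center (i, k)) (KS.rint (i, k) - 1) ⊆
        G.ball (KS.center (i, k)) (KS.rext (i, k)) :=
      G.ball_mono _ (by have := KS.rint_lt_rext (i, k); omega)
    let e : ↥((KS.Ginf k).ball (KS.xinf k) (s + 2)) → V := fun a => ↑(ι.toFun a)
    have he : Function.Injective e := fun a b h => ι.inj (Subtype.ext h)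
    have heX1 : ∀ a, e a ∈ G.ball (KS.center (i, k)) (KS.rint (i, k) - 1) :=
      fun a => (ι.toFun a).2
    let κ : ↥((KS.Ginf k).ball (KS.xinf k) (s + 2)) → KS.Vinf k :=
      fun a => j.toFun ⟨e a, hX12 (heX1 a)⟩
    have hκinj : Function.Injective κ := by
      intro a b h
      have h2 := congrArg Subtype.val (j.inj h)
      exact he h2
    have hκE : ∀ a b, (KS.Ginf k).E (κ a) (κ b) = (KS.Ginf k).E ↑a ↑b := by
      intro a b
      have h1 : G.E (e a) (e b) = (KS.Ginf k).E (κ a) (κ b) :=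
        j.mapE ⟨e a, hX12 (heX1 a)⟩ ⟨e b, hX12 (heX1 b)⟩
      have h2 : (KS.Ginf k).E ↑a ↑b = G.E (e a) (e b) := ι.mapE a b
      rw [← h1, ← h2]
    have hκm : ∀ a, G.m (e a) = (KS.Ginf k).m ↑a :=
      fun a => (ι.mapm a).symm
    have hEab : ∀ a b, G.E (e a) (e b) = (KS.Ginf k).E ↑a ↑b :=
      fun a b => (ι.mapE a b).symm
    have hκ0 : κ ⟨KS.xinf k, (KS.Ginf k).center_mem_ball _ _⟩ = KS.xinf k := by
      have hvv : e ⟨KS.xinf k, (KS.Ginf k).center_mem_ball _ _⟩ = KS.center (i, k) :=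
        congrArg Subtype.val ι.base
      have h1 : (⟨e ⟨KS.xinf k, (KS.Ginf k).center_mem_ball _ _⟩,
          hX12 (heX1 ⟨KS.xinf k, (KS.Ginf k).center_mem_ball _ _⟩)⟩ :
            ↥(G.ball (KS.center (i, k)) (KS.rext (i, k)))) =
          ⟨KS.center (i, k), G.center_mem_ball _ _⟩ :=
        Subtype.ext hvv
      exact (congrArg j.toFun h1).trans j.base
    have hκdist : ∀ a : ↥((KS.Ginf k).ball (KS.xinf k) (s + 2)),
        (KS.Ginf k).toSimpleGraph.dist (KS.xinf k) (κ a) ≤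
          (KS.Ginf k).toSimpleGraph.dist (KS.xinf k) ↑a := by
      intro a
      obtain ⟨w, hw⟩ := hHc.exists_walk_length_eq_dist (KS.xinf k) ↑a
      have hsup : ∀ u ∈ w.support, u ∈ (KS.Ginf k).ball (KS.xinf k) (s + 2) := by
        intro u hu
        have h1 := SimpleGraph.dist_le (w.takeUntil u hu)
        have h2 := SimpleGraph.Walk.length_takeUntil_le w hu
        have h3 : w.length ≤ s + 2 := by rw [hw]; exact a.2
        exact le_trans h1 (le_trans h2 h3)
      obtain ⟨w1, hl1⟩ := (KS.Ginf k).lift_walk w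
        ((KS.Ginf k).center_mem_ball _ _) a.2 hsup
      obtain ⟨w2, hl2⟩ := WeightedGraph.map_walk
        ((KS.Ginf k).induce ((KS.Ginf k).ball (KS.xinf k) (s + 2))) (KS.Ginf k)
        κ hκinj (fun a b => hκE a b) w1
      have h4 := SimpleGraph.dist_le w2
      rw [hl2, hl1, hw] at h4
      rw [hκ0] at h4
      exact h4
    have hκmem : ∀ a, κ a ∈ (KS.Ginf k).ball (KS.xinf k) (s + 2) :=
      fun a => le_trans (hκdist a) a.2
    haveI : Finite ↥((KS.Ginf k).ball (KS.xinf k) (s + 2)) :=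
      ((KS.Ginf k).ball_finite hHc _ _).to_subtype
    have hκsurj : Function.Surjective (fun a =>
        (⟨κ a, hκmem a⟩ : ↥((KS.Ginf k).ball (KS.xinf k) (s + 2)))) :=
      Finite.injective_iff_surjective.mp
        (fun a b h => hκinj (congrArg Subtype.val h))
    have hN : ∀ b : ↥((KS.Ginf k).ball (KS.xinf k) (s + 2)),
        (KS.Ginf k).toSimpleGraph.dist (KS.xinf k) ↑b ≤ s + 1 →
        ∀ y : V, G.E (e b) y ≠ 0 → y ∈ Set.range e := by
      intro b hb y hEy
      have hy2 : y ∈ G.ball (KS.center (i, k)) (KS.rext (i, k)) := by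
        have h1 : G.toSimpleGraph.dist (KS.center (i, k)) (e b) ≤
            KS.rint (i, k) - 1 := heX1 b
        have h2 := G.dist_le_one_of_E hEy
        have h3 := hGc.dist_triangle (u := KS.center (i, k)) (v := e b) (w := y)
        have h4 := KS.rint_lt_rext (i, k)
        have h5 := KS.rint_pos (i, k)
        show G.toSimpleGraph.dist (KS.center (i, k)) y ≤ KS.rext (i, k)
        omega
      have h6 : G.E (e b) y = (KS.Ginf k).E (κ b) (j.toFun ⟨y, hy2⟩) :=
        j.mapE ⟨e b, hX12 (heX1 b)⟩ ⟨y, hy2⟩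
      have hy'r : j.toFun ⟨y, hy2⟩ ∈ (KS.Ginf k).ball (KS.xinf k) (s + 2) := by
        have h7 := le_trans (hκdist b) hb
        have h8 := (KS.Ginf k).dist_le_one_of_E (h6 ▸ hEy)
        have h9 := hHc.dist_triangle (u := KS.xinf k) (v := κ b)
          (w := j.toFun ⟨y, hy2⟩)
        show (KS.Ginf k).toSimpleGraph.dist (KS.xinf k) (j.toFun ⟨y, hy2⟩) ≤ s + 2
        omega
      obtain ⟨A, hA⟩ := hκsurj ⟨j.toFun ⟨y, hy2⟩, hy'r⟩
      have hκA : κ A = j.toFun ⟨y, hy2⟩ := congrArg Subtype.val hA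
      have hAy := j.inj hκA
      have h10 := congrArg Subtype.val hAy
      exact ⟨A, h10⟩
    -- the transported function
    let ψ0 : V → ℂ := Function.extend e (fun a => f ↑a) 0
    have hψe : ∀ a, ψ0 (e a) = f ↑a := fun a => he.extend_apply _ _ _
    have hψnr : ∀ y, y ∉ Set.range e → ψ0 y = 0 := by
      intro y hy
      have hne : ¬ ∃ a, e a = y := hy
      show Function.extend e (fun a => f ↑a) 0 y = 0
      rw [Function.extend_apply' _ _ _ hne]
      rfl
    have hsuppsub : ∀ y, ψ0 y ≠ 0 → ∃ a, e a = y ∧ f ↑a ≠ 0 := by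
      intro y hy
      rcases em (y ∈ Set.range e) with h | hnot
      · obtain ⟨a, rfl⟩ := h
        exact ⟨a, rfl, by rwa [hψe a] at hy⟩
      · exact absurd (hψnr y hnot) hy
    have hψfin : (Function.support ψ0).Finite := by
      have himg : Function.support ψ0 ⊆ e '' {a | f ↑a ≠ 0} := by
        intro y hy
        obtain ⟨a, rfl, ha⟩ := hsuppsub y hy
        exact ⟨a, ha, rfl⟩
      refine Set.Finite.subset (Set.Finite.image e ?_) himg
      exact Set.Finite.preimage Subtype.coe_injective.injOn hf
    have hψsupX : Function.support ψ0 ⊆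
        G.ball (KS.center (i, k)) (KS.rext (i, k)) := by
      intro y hy
      obtain ⟨a, rfl, _⟩ := hsuppsub y hy
      exact hX12 (heX1 a)
    -- vanishing of the localized Laplacian far from the base point
    have hH0 : ∀ w, ¬ ((KS.Ginf k).toSimpleGraph.dist (KS.xinf k) w ≤ s + 1) →
        (KS.Ginf k).lapl f w = 0 ∧ f w = 0 := by
      intro w hw
      have hf0 : f w = 0 := by
        by_contra h
        exact hw (le_trans (hfd w h) (by omega))
      refine ⟨(KS.Ginf k).lapl_eq_zero hf0 ?_, hf0⟩
      intro y hEy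
      by_contra hfy
      have h1 := hfd y hfy
      have h2 := (KS.Ginf k).dist_le_one_of_E ((KS.Ginf k).E_symm w y ▸ hEy)
      have h3 := hHc.dist_triangle (u := KS.xinf k) (v := y) (w := w)
      omega
    have hG0 : ∀ x : V, ψ0 x = 0 →
        (∀ b : ↥((KS.Ginf k).ball (KS.xinf k) (s + 2)),
          f ↑b ≠ 0 → G.E x (e b) = 0) → G.lapl ψ0 x = 0 := by
      intro x hx hnb
      refine G.lapl_eq_zero hx ?_
      intro y hEy
      by_contra hψy
      obtain ⟨b, rfl, hb⟩ := hsuppsub y hψy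
      exact hEy (hnb b hb)
    -- the key pointwise identity
    have key : ∀ a : ↥((KS.Ginf k).ball (KS.xinf k) (s + 2)),
        G.lapl ψ0 (e a) = (KS.Ginf k).lapl f ↑a := by
      intro a
      by_cases hia : (KS.Ginf k).toSimpleGraph.dist (KS.xinf k) ↑a ≤ s + 1
      · have h1 : Function.support
            (fun y => (G.E (e a) y : ℂ) * (ψ0 (e a) - ψ0 y)) ⊆ Set.range e := by
          intro y hy
          have hE : G.E (e a) y ≠ 0 := by
            intro h0
            apply hy
            simp [h0]
          exact hN a hia y hE
        have h2 : Function.support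
            (fun w => ((KS.Ginf k).E ↑a w : ℂ) * (f ↑a - f w)) ⊆
            Set.range (Subtype.val :
              ↥((KS.Ginf k).ball (KS.xinf k) (s + 2)) → KS.Vinf k) := by
          intro w hw
          have hE : (KS.Ginf k).E ↑a w ≠ 0 := by
            intro h0
            apply hw
            simp [h0]
          rw [Subtype.range_coe]
          have hd1 := (KS.Ginf k).dist_le_one_of_E hE
          have hd2 := hHc.dist_triangle (u := KS.xinf k) (v := (↑a : KS.Vinf k))
            (w := w)
          show (KS.Ginf k).toSimpleGraph.dist (KS.xinf k) w ≤ s + 2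
          omega
        simp only [WeightedGraph.lapl]
        rw [hκm a]
        congr 1
        rw [finsum_comp_inj he _ h1, finsum_comp_inj Subtype.coe_injective _ h2]
        refine finsum_congr fun b => ?_
        rw [hEab a b, hψe a, hψe b]
      · have hfa := (hH0 ↑a hia).2
        rw [(hH0 ↑a hia).1]
        refine hG0 (e a) (by rw [hψe a]; exact hfa) ?_
        intro b hb
        by_contra hEab'
        have h1 : (KS.Ginf k).E ↑a ↑b ≠ 0 := by
          rw [← hEab a b]; exact hEab'
        have hd1 := (KS.Ginf k).dist_le_one_of_E ((KS.Ginf k).E_symm ↑a ↑b ▸ h1)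
        have hd2 := hfd ↑b hb
        have hd3 := hHc.dist_triangle (u := KS.xinf k) (v := (↑b : KS.Vinf k))
          (w := (↑a : KS.Vinf k))
        exact hia (by omega)
    have key2 : ∀ y : V, y ∉ Set.range e → G.lapl ψ0 y = 0 := by
      intro y hy
      refine hG0 y (hψnr y hy) ?_
      intro b hb
      by_contra hEyb
      have hEby : G.E (e b) y ≠ 0 := by rw [G.E_symm]; exact hEyb
      exact hy (hN b (le_trans (hfd ↑b hb) (by omega)) y hEby)
    -- norm transports
    have ht1 : G.normSq ψ0 = (KS.Ginf k).normSq f :=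
      WeightedGraph.normSq_transport (KS.Ginf k) G he (fun a => hκm a)
        (fun w hw => by
          by_contra h
          exact hw (le_trans (hfd w h) (by omega)))
        hψnr hψe
    have ht2 : G.normSq (fun x => G.lapl ψ0 x - (lam : ℂ) * ψ0 x)
        = (KS.Ginf k).normSq
            (fun w => (KS.Ginf k).lapl f w - (lam : ℂ) * f w) :=
      WeightedGraph.normSq_transport (KS.Ginf k) G he (fun a => hκm a)
        (fun w hw => by
          have h := hH0 w (fun hle => hw (le_trans hle (by omega)))
          rw [h.1, h.2]
          ring)
        (fun y hy => by rw [key2 y hy, hψnr y hy]; ring)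
        (fun a => by rw [key a, hψe a])
    exact ⟨i, ψ0, hic, hψfin, hψsupX, ht1, ht2⟩
  -- assemble the sequence with pairwise distinct patterns
  choose idx ψF hnotin hsupfin hsub heq1 heq2 using
    fun (Fn : Finset ℕ) (n : ℕ) => core Fn (φ n) (hsupp n)
  let acc : ℕ → Finset ℕ := fun n =>
    Nat.rec (motive := fun _ => Finset ℕ) ∅ (fun m Fm => insert (idx Fm m) Fm) n
  have hAcc : ∀ n, acc (n + 1) = insert (idx (acc n) n) (acc n) := fun n => rfl
  have haccmono : ∀ m n, m ≤ n → acc m ⊆ acc n := by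
    intro m n h
    induction n with
    | zero =>
      have : m = 0 := Nat.le_zero.mp h
      subst this
      exact subset_rfl
    | succ n ih =>
      rcases Nat.lt_or_ge m (n + 1) with h1 | h2
      · refine subset_trans (ih (Nat.lt_succ_iff.mp h1)) ?_
        rw [hAcc]
        exact Finset.subset_insert _ _
      · have : m = n + 1 := le_antisymm h h2
        subst this
        exact subset_rfl
  have hIdx : ∀ m n, m < n → idx (acc m) m ≠ idx (acc n) n := by
    intro m n h hEq
    have h1 : idx (acc m) m ∈ acc (m + 1) := by
      rw [hAcc]; exact Finset.mem_insert_self _ _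
    have h2 : idx (acc m) m ∈ acc n := haccmono _ _ h h1
    rw [hEq] at h2
    exact hnotin (acc n) n h2
  have hdisj : Pairwise fun n n' =>
      Disjoint (Function.support (ψF (acc n) n)) (Function.support (ψF (acc n') n')) := by
    intro n n' hne
    have hii : idx (acc n) n ≠ idx (acc n') n' := by
      rcases Nat.lt_or_ge n n' with h | h
      · exact hIdx n n' h
      · exact (hIdx n' n (lt_of_le_of_ne h (Ne.symm hne))).symm
    have hpq : ((idx (acc n) n, k) : ℕ × KS.J) ≠ (idx (acc n') n', k) :=
      fun hEq => hii (congrArg Prod.fst hEq)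
    exact Disjoint.mono (hsub (acc n) n) (hsub (acc n') n') (KS.disj _ _ hpq)
  refine ⟨fun n => ψF (acc n) n, fun n => hsupfin (acc n) n, ?_, hdisj, ?_, ?_⟩
  · intro n
    show G.wnorm (ψF (acc n) n) = 1
    rw [WeightedGraph.wnorm, heq1 (acc n) n, ← WeightedGraph.wnorm]
    exact hnorm n
  · intro K hK
    have hfin2 : {n : ℕ | ¬ Disjoint (Function.support (ψF (acc n) n)) K}.Finite := by
      have hx : ∀ n : {n : ℕ | ¬ Disjoint (Function.support (ψF (acc n) n)) K},
          ∃ x, x ∈ Function.support (ψF (acc ↑n) ↑n) ∧ x ∈ K :=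
        fun n => Set.not_disjoint_iff.mp n.2
      choose gx hg1 hg2 using hx
      haveI := hK.to_subtype
      have hfinn : Finite {n : ℕ | ¬ Disjoint (Function.support (ψF (acc n) n)) K} := by
        refine Finite.of_injective (fun n => (⟨gx n, hg2 n⟩ : K)) ?_
        intro n n' hEq
        by_contra hne
        have hnn : (n : ℕ) ≠ (n' : ℕ) := fun h => hne (Subtype.ext h)
        have hd := hdisj hnn
        have hvv : gx n = gx n' := congrArg Subtype.val hEq
        exact Set.disjoint_left.mp hd (hg1 n) (hvv ▸ hg1 n')
      exact Set.toFinite _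
    have hc := hfin2.compl_mem_cofinite
    rw [Nat.cofinite_eq_atTop] at hc
    filter_upwards [hc] with n hn
    exact not_not.mp hn
  · refine hconv.congr fun n => ?_
    exact congrArg Real.sqrt (heq2 (acc n) n).symm
end

section
/- Let G = (V, E, m) be a weighted graph and χ : V → ℝ any function. For every finitely supported f : V → ℂ one has | Σ_{x,y∈V} E(x,y) (χ(x) − χ(y)) conj(f(x)) f(y) | ≤ Σ_{x∈V} m(x) G_χ(x) |f(x)|², where G_χ(x) := (1/m(x)) Σ_{y∈V} E(x,y) |χ(y) − χ(x)|. (The left-hand side equals |⟨f, [Δ_G, χ(·)] f⟩_{ℓ²_m(V)}|, where [Δ_G, χ(·)]f := Δ_G(χ f) − χ Δ_G f.) -/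
open scoped BigOperators

/-- **Lemma 3.2, 1).** For every bounded (indeed, arbitrary) `χ : V → ℝ` and every
finitely supported `f : V → ℂ`, the commutator pairing satisfies
`|⟨f, [Δ_G, χ(·)] f⟩| = |Σ_{x,y} E(x,y)(χ(x)-χ(y)) conj(f(x)) f(y)| ≤ ⟨f, G_χ(·) f⟩`,
where `G_χ(x) = (1/m(x)) Σ_y E(x,y)|χ(y)-χ(x)|`. -/
theorem commutator_bound
    {V : Type} [Countable V] (G : WeightedGraph V) (hconn : G.toSimpleGraph.Connected)
    (χ : V → ℝ) (f : V → ℂ) (hf : (Function.support f).Finite) :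
    ‖∑ᶠ x, ∑ᶠ y, (G.E x y : ℂ) * ((χ x : ℝ) - χ y : ℝ) *
        (starRingEnd ℂ) (f x) * f y‖ ≤
      ∑ᶠ x, G.m x * ((G.m x)⁻¹ * ∑ᶠ y, G.E x y * |χ y - χ x|) * ‖f x‖ ^ 2 := by
  classical
  set s : Finset V := hf.toFinset with hs
  have hfs : ∀ x ∉ s, f x = 0 := by
    intro x hx
    by_contra h
    exact hx (hf.mem_toFinset.mpr h)
  set T : V → V → ℂ := fun x y =>
    (G.E x y : ℂ) * ((χ x : ℝ) - χ y : ℝ) * (starRingEnd ℂ) (f x) * f y with hT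
  -- LHS as a finite double sum
  have hinner : ∀ x, ∑ᶠ y, T x y = ∑ y ∈ s, T x y := by
    intro x
    apply finsum_eq_finset_sum_of_support_subset
    intro y hy
    by_contra hys
    simp [hT, hfs y hys] at hy
  have hLHS : (∑ᶠ x, ∑ᶠ y, T x y) = ∑ x ∈ s, ∑ y ∈ s, T x y := by
    rw [funext hinner]
    apply finsum_eq_finset_sum_of_support_subset
    intro x hx
    by_contra hxs
    simp [hT, hfs x hxs] at hx
  -- inner sum on RHS
  set A : V → ℝ := fun x => ∑ᶠ y, G.E x y * |χ y - χ x| with hA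
  have hRHS : (∑ᶠ x, G.m x * ((G.m x)⁻¹ * A x) * ‖f x‖ ^ 2)
      = ∑ x ∈ s, A x * ‖f x‖ ^ 2 := by
    have h1 : ∀ x, G.m x * ((G.m x)⁻¹ * A x) * ‖f x‖ ^ 2 = A x * ‖f x‖ ^ 2 := by
      intro x
      have := (G.m_pos x).ne'
      field_simp
    rw [funext h1]
    apply finsum_eq_finset_sum_of_support_subset
    intro x hx
    by_contra hxs
    simp [hfs x hxs] at hx
  rw [hLHS, hRHS]
  -- pointwise norm bound
  have hnorm : ∀ x y, ‖T x y‖ ≤ G.E x y * |χ y - χ x| * (‖f x‖ ^ 2 + ‖f y‖ ^ 2) / 2 := by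
    intro x y
    have h1 : ‖T x y‖ = G.E x y * |χ y - χ x| * (‖f x‖ * ‖f y‖) := by
      simp only [hT, norm_mul, Complex.norm_real, RCLike.norm_conj, Real.norm_eq_abs,
        abs_of_nonneg (G.E_nonneg x y), abs_sub_comm (χ x) (χ y)]
      ring
    rw [h1]
    have h2 : ‖f x‖ * ‖f y‖ ≤ (‖f x‖ ^ 2 + ‖f y‖ ^ 2) / 2 := by
      nlinarith [sq_nonneg (‖f x‖ - ‖f y‖)]
    have hE : 0 ≤ G.E x y * |χ y - χ x| :=
      mul_nonneg (G.E_nonneg x y) (abs_nonneg _)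
    calc G.E x y * |χ y - χ x| * (‖f x‖ * ‖f y‖)
        ≤ G.E x y * |χ y - χ x| * ((‖f x‖ ^ 2 + ‖f y‖ ^ 2) / 2) :=
          mul_le_mul_of_nonneg_left h2 hE
      _ = G.E x y * |χ y - χ x| * (‖f x‖ ^ 2 + ‖f y‖ ^ 2) / 2 := by ring
  calc ‖∑ x ∈ s, ∑ y ∈ s, T x y‖
      ≤ ∑ x ∈ s, ∑ y ∈ s, ‖T x y‖ := by
        refine (norm_sum_le _ _).trans (Finset.sum_le_sum fun x _ => norm_sum_le _ _)
    _ ≤ ∑ x ∈ s, ∑ y ∈ s, G.E x y * |χ y - χ x| * (‖f x‖ ^ 2 + ‖f y‖ ^ 2) / 2 :=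
        Finset.sum_le_sum fun x _ => Finset.sum_le_sum fun y _ => hnorm x y
    _ = ∑ x ∈ s, ∑ y ∈ s, G.E x y * |χ y - χ x| * ‖f x‖ ^ 2 := by
        have hsymm : ∀ x y, G.E y x * |χ x - χ y| = G.E x y * |χ y - χ x| := by
          intro x y
          rw [G.E_symm, abs_sub_comm]
        have hswap : (∑ x ∈ s, ∑ y ∈ s, G.E x y * |χ y - χ x| * ‖f y‖ ^ 2)
            = ∑ x ∈ s, ∑ y ∈ s, G.E x y * |χ y - χ x| * ‖f x‖ ^ 2 := by
          rw [Finset.sum_comm]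
          exact Finset.sum_congr rfl fun x _ => Finset.sum_congr rfl fun y _ => by
            rw [hsymm]
        have expand : ∀ x y : V, G.E x y * |χ y - χ x| * (‖f x‖ ^ 2 + ‖f y‖ ^ 2) / 2
            = (G.E x y * |χ y - χ x| * ‖f x‖ ^ 2) / 2
              + (G.E x y * |χ y - χ x| * ‖f y‖ ^ 2) / 2 := fun x y => by ring
        simp_rw [expand, Finset.sum_add_distrib, ← Finset.sum_div]
        rw [hswap]
        ring
    _ ≤ ∑ x ∈ s, A x * ‖f x‖ ^ 2 := by
        refine Finset.sum_le_sum fun x _ => ?_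
        rw [← Finset.sum_mul]
        refine mul_le_mul_of_nonneg_right ?_ (by positivity)
        -- ∑ y in s, E x y |χ y - χ x| ≤ A x
        have hsupp : (Function.support fun y => G.E x y * |χ y - χ x|) ⊆
            ↑((G.locFin x).toFinset ∪ s) := by
          intro y hy
          simp only [Finset.coe_union, Set.mem_union, Finset.mem_coe,
            Set.Finite.mem_toFinset]
          left
          intro hE0
          simp [Function.mem_support, hE0] at hy
        have hAeq : A x = ∑ y ∈ (G.locFin x).toFinset ∪ s, G.E x y * |χ y - χ x| :=
          finsum_eq_finset_sum_of_support_subset _ hsupp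
        rw [hAeq]
        exact Finset.sum_le_sum_of_subset_of_nonneg Finset.subset_union_right
          fun y _ _ => mul_nonneg (G.E_nonneg x y) (abs_nonneg _)
end

section
/- Let H be a complex inner product space, let p ≥ 1, let e_1, …, e_p ∈ H with ‖e_j‖ = 1 for all j, and let β_1, …, β_p ∈ ℂ. Then there exist θ_1, …, θ_p ∈ [0, 2π] such that ‖ Σ_{j=1}^p e^{iθ_j} β_j e_j ‖² ≥ Σ_{j=1}^p |β_j|². -/
open Complex in
lemma amar_aux
    {H : Type*} [NormedAddCommGroup H] [InnerProductSpace ℂ H]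
    (p : ℕ) (e : Fin p → H) (he : ∀ j, ‖e j‖ = 1) (β : Fin p → ℂ)
    (s : Finset (Fin p)) :
    ∃ θ : Fin p → ℝ, (∀ j, θ j ∈ Set.Icc (0 : ℝ) (2 * Real.pi)) ∧
      ∑ j ∈ s, ‖β j‖ ^ 2 ≤
        ‖∑ j ∈ s, (Complex.exp ((θ j : ℂ) * Complex.I) * β j) • e j‖ ^ 2 := by
  classical
  induction s using Finset.induction with
  | empty =>
      refine ⟨0, fun j => ⟨le_rfl, by positivity⟩, by simp⟩
  | @insert a s ha ih =>
      obtain ⟨θ, hθ, hsum⟩ := ih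
      set S : H := ∑ j ∈ s, (Complex.exp ((θ j : ℂ) * Complex.I) * β j) • e j with hS
      set c : ℂ := (starRingEnd ℂ) (β a) * inner ℂ (e a) S with hc
      set t : ℝ := if 0 ≤ c.arg then c.arg else c.arg + 2 * Real.pi with ht
      have ht_mem : t ∈ Set.Icc (0 : ℝ) (2 * Real.pi) := by
        have h1 := Complex.arg_le_pi c
        have h2 := Complex.neg_pi_lt_arg c
        have hpi := Real.pi_pos
        rw [ht]
        split_ifs with h
        · constructor <;> linarith
        · constructor <;> linarith
      have hexp : Complex.exp (-(t : ℂ) * Complex.I) * c = (‖c‖ : ℂ) := by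
        have key : Complex.exp (-(c.arg : ℂ) * Complex.I) * c = (‖c‖ : ℂ) := by
          apply mul_left_cancel₀ (Complex.exp_ne_zero ((c.arg : ℂ) * Complex.I))
          rw [← mul_assoc, ← Complex.exp_add,
            show ((c.arg : ℂ) * Complex.I + -(c.arg : ℂ) * Complex.I) = 0 by ring,
            Complex.exp_zero, one_mul, mul_comm (Complex.exp _),
            Complex.norm_mul_exp_arg_mul_I]
        rw [ht]
        split_ifs with h
        · exact key
        · rw [show (-(((c.arg + 2 * Real.pi : ℝ) : ℂ)) * Complex.I)
              = -(c.arg : ℂ) * Complex.I + (-(2 * Real.pi : ℝ) : ℂ) * Complex.I by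
              push_cast; ring]
          rw [Complex.exp_add]
          have : Complex.exp ((-(2 * Real.pi : ℝ) : ℂ) * Complex.I) = 1 := by
            rw [show ((-(2 * Real.pi : ℝ) : ℂ) * Complex.I)
                = (-1 : ℤ) * (2 * Real.pi * Complex.I) by push_cast; ring]
            exact Complex.exp_int_mul_two_pi_mul_I (-1)
          rw [this, mul_one]
          exact key
      refine ⟨Function.update θ a t, ?_, ?_⟩
      · intro j
        rcases eq_or_ne j a with rfl | hj
        · simpa using ht_mem
        · simpa [Function.update_of_ne hj] using hθ j
      · rw [Finset.sum_insert ha, Finset.sum_insert ha]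
        have hrest : ∑ j ∈ s, (Complex.exp (((Function.update θ a t j : ℝ) : ℂ)
            * Complex.I) * β j) • e j = S := by
          rw [hS]
          refine Finset.sum_congr rfl fun j hj => ?_
          rw [Function.update_of_ne (by rintro rfl; exact ha hj)]
        rw [hrest, Function.update_self]
        set v : H := (Complex.exp ((t : ℂ) * Complex.I) * β a) • e a with hv
        have hnormv : ‖v‖ = ‖β a‖ := by
          rw [hv, norm_smul]
          simp [Complex.norm_exp, he a]
        have hre : RCLike.re (inner ℂ v S : ℂ) = ‖c‖ := by
          rw [hv, inner_smul_left]
          have : (starRingEnd ℂ) (Complex.exp ((t : ℂ) * Complex.I) * β a)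
              * (inner ℂ (e a) S : ℂ) = Complex.exp (-(t : ℂ) * Complex.I) * c := by
            rw [map_mul, ← Complex.exp_conj,
              show (starRingEnd ℂ) ((t : ℂ) * Complex.I) = -(t : ℂ) * Complex.I by
                simp [Complex.conj_I], hc]
            ring
          rw [this, hexp]
          simp
        have hexpand : ‖v + S‖ ^ 2 = ‖v‖ ^ 2 + 2 * RCLike.re (inner ℂ v S : ℂ) + ‖S‖ ^ 2 :=
          norm_add_sq (𝕜 := ℂ) v S
        rw [hexpand, hnormv, hre]
        have habs : (0 : ℝ) ≤ ‖c‖ := norm_nonneg c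
        linarith

/-- **Lemma 3.5 a) (Amar's lemma).** Given unit vectors `e_1, …, e_p` in a complex inner
product space and scalars `β_1, …, β_p`, there are phases `θ_j ∈ [0, 2π]` such that
`‖Σ_j e^{iθ_j} β_j e_j‖² ≥ Σ_j |β_j|²`. -/
theorem amar_lemma_a
    {H : Type*} [NormedAddCommGroup H] [InnerProductSpace ℂ H]
    (p : ℕ) (hp : 1 ≤ p) (e : Fin p → H) (he : ∀ j, ‖e j‖ = 1) (β : Fin p → ℂ) :
    ∃ θ : Fin p → ℝ, (∀ j, θ j ∈ Set.Icc (0 : ℝ) (2 * Real.pi)) ∧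
      ∑ j, ‖β j‖ ^ 2 ≤
        ‖∑ j, (Complex.exp ((θ j : ℂ) * Complex.I) * β j) • e j‖ ^ 2 := by
  simpa using amar_aux p e he β Finset.univ
end

section
/- Let H be a complex inner product space, let p ≥ 1, and let f_1, …, f_p ∈ H. Then there exist θ_1, …, θ_p ∈ [0, 2π] such that ‖ Σ_{j=1}^p e^{iθ_j} f_j ‖² ≥ Σ_{j=1}^p ‖f_j‖². -/
/-- **Lemma 3.5 b) (Amar's lemma).** Given vectors `f_1, …, f_p` in a complex inner
product space, there are phases `θ_j ∈ [0, 2π]` such that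
`‖Σ_j e^{iθ_j} f_j‖² ≥ Σ_j ‖f_j‖²`. -/
theorem amar_lemma_b
    {H : Type*} [NormedAddCommGroup H] [InnerProductSpace ℂ H]
    (p : ℕ) (hp : 1 ≤ p) (f : Fin p → H) :
    ∃ θ : Fin p → ℝ, (∀ j, θ j ∈ Set.Icc (0 : ℝ) (2 * Real.pi)) ∧
      ∑ j, ‖f j‖ ^ 2 ≤ ‖∑ j, Complex.exp ((θ j : ℂ) * Complex.I) • f j‖ ^ 2 := by
  classical
  suffices h : ∀ s : Finset (Fin p), ∃ θ : Fin p → ℝ,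
      (∀ j, θ j ∈ Set.Icc (0 : ℝ) (2 * Real.pi)) ∧
      ∑ j ∈ s, ‖f j‖ ^ 2 ≤ ‖∑ j ∈ s, Complex.exp ((θ j : ℂ) * Complex.I) • f j‖ ^ 2 by
    simpa using h Finset.univ
  intro s
  induction s using Finset.induction_on with
  | empty =>
    refine ⟨fun _ => 0, fun j => ⟨le_refl 0, by positivity⟩, by simp⟩
  | @insert a s ha ih =>
    obtain ⟨θ, hθ, hle⟩ := ih
    set g : H := ∑ j ∈ s, Complex.exp ((θ j : ℂ) * Complex.I) • f j with hg
    set t : ℝ := if 0 ≤ (inner ℂ (f a) g : ℂ).re then 0 else Real.pi with ht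
    have htmem : t ∈ Set.Icc (0 : ℝ) (2 * Real.pi) := by
      rw [ht]
      split_ifs
      · exact ⟨le_refl 0, by positivity⟩
      · exact ⟨Real.pi_pos.le, by nlinarith [Real.pi_pos]⟩
    refine ⟨Function.update θ a t, ?_, ?_⟩
    · intro j
      by_cases hj : j = a
      · subst hj; simpa using htmem
      · simpa [Function.update_of_ne hj] using hθ j
    · rw [Finset.sum_insert ha, Finset.sum_insert ha]
      have hrest : ∑ j ∈ s, Complex.exp ((Function.update θ a t j : ℂ) * Complex.I) • f j = g := by
        apply Finset.sum_congr rfl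
        intro j hj
        have : j ≠ a := fun h => ha (h ▸ hj)
        rw [Function.update_of_ne this]
      rw [Function.update_self, hrest]
      set c : ℂ := Complex.exp ((t : ℂ) * Complex.I) with hc
      have hre : 0 ≤ (inner ℂ (c • f a) g : ℂ).re := by
        rw [inner_smul_left]
        rw [ht] at hc
        split_ifs at hc with h
        · have : c = 1 := by rw [hc]; simp
          rw [this]; simpa using h
        · have : c = -1 := by rw [hc]; simpa using Complex.exp_pi_mul_I
          rw [this]; simp
          linarith [not_le.mp h]
      have hnorm : ‖c • f a‖ = ‖f a‖ := by
        rw [norm_smul, hc, Complex.norm_exp_ofReal_mul_I, one_mul]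
      have hexp : ‖c • f a + g‖ ^ 2 = ‖c • f a‖ ^ 2 + 2 * (inner ℂ (c • f a) g : ℂ).re + ‖g‖ ^ 2 := by
        simpa only [RCLike.re_to_complex] using norm_add_sq (𝕜 := ℂ) (c • f a) g
      rw [hexp, hnorm]
      linarith
end

section
/- Fix s ∈ (0,1). Let m : ℤ → (0,∞) with m(0) = s and m(x) = 1 for x ≠ 0, and let Δ_s be the bounded self-adjoint operator on ℓ²_m(ℤ) given by (Δ_s f)(x) = (1/m(x)) (2 f(x) − f(x−1) − f(x+1)). Then λ_s := 4/(s(2−s)) is an eigenvalue of Δ_s: there exists a nonzero f ∈ ℓ²_m(ℤ) with Δ_s f = λ_s f. -/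
set_option maxHeartbeats 1000000

open MeasureTheory

/-- The weighted counting measure `μ {x} = m x` on a discrete space,
realising `ℓ²_m(V)` as `Lp ℂ 2 (wMeasure m)`. -/
noncomputable def wMeasure {V : Type} [MeasurableSpace V] (m : V → ℝ) : Measure V :=
  Measure.sum fun x => (m x).toNNReal • Measure.dirac x

/-- The vertex weight on `ℤ` equal to `s` at `0` and `1` elsewhere. -/
noncomputable def mW (s : ℝ) : ℤ → ℝ := fun x => if x = 0 then s else 1

lemma lintegral_wMeasure {V : Type} [MeasurableSpace V] [MeasurableSingletonClass V]
    (m : V → ℝ) (h : V → ENNReal) :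
    ∫⁻ x, h x ∂(wMeasure m) = ∑' x, (m x).toNNReal * h x := by
  rw [wMeasure, lintegral_sum_measure]
  congr 1; funext x
  rw [lintegral_smul_measure, lintegral_dirac, ENNReal.smul_def, smul_eq_mul]

lemma wMeasure_forall {V : Type} [MeasurableSpace V] [MeasurableSingletonClass V]
    (m : V → ℝ) (hm : ∀ x, 0 < m x) {p : V → Prop}
    (h : ∀ᵐ x ∂(wMeasure m), p x) : ∀ x, p x := by
  intro x
  by_contra hx
  rw [ae_iff] at h
  have h1 : wMeasure m {x} ≤ wMeasure m {y | ¬ p y} :=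
    measure_mono (by simpa using hx)
  have h2 : wMeasure m {x} = 0 := le_antisymm (h1.trans_eq h) zero_le
  have h3 : ((m x).toNNReal • Measure.dirac x) {x} ≤ wMeasure m {x} := by
    rw [wMeasure, Measure.sum_apply _ (measurableSet_singleton x)]
    exact ENNReal.le_tsum x
  rw [h2] at h3
  simp only [Measure.smul_apply, Measure.dirac_apply_of_mem (Set.mem_singleton x),
    smul_eq_mul, mul_one, nonpos_iff_eq_zero, ENNReal.coe_eq_zero, ENNReal.smul_def] at h3
  rw [Real.toNNReal_eq_zero] at h3
  exact absurd h3 (not_le.2 (hm x))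

lemma memLp_g (s : ℝ) (hs : s ∈ Set.Ioo (0:ℝ) 1) :
    MemLp (fun x : ℤ => ((-(s/(2-s)) : ℝ) : ℂ) ^ x.natAbs) 2
      (wMeasure (fun x : ℤ => if x = 0 then s else 1)) := by
  obtain ⟨hs0, hs1⟩ := hs
  set a : ℝ := s / (2 - s) with ha
  have h2s : (0:ℝ) < 2 - s := by linarith
  have ha0 : 0 ≤ a := div_nonneg hs0.le h2s.le
  have ha1 : a < 1 := by rw [div_lt_one h2s]; linarith
  constructor
  · exact (measurable_from_top (f := fun x : ℤ => ((-a : ℝ) : ℂ) ^ x.natAbs)).aestronglyMeasurable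
  · rw [eLpNorm_lt_top_iff_lintegral_rpow_enorm_lt_top (by norm_num) (by norm_num)]
    simp only [enorm_eq_nnnorm]
    rw [lintegral_wMeasure]
    have hterm : ∀ x : ℤ, ((if x = 0 then s else 1 : ℝ)).toNNReal *
        (‖((-a : ℝ) : ℂ) ^ x.natAbs‖₊ : ENNReal) ^ (2:ENNReal).toReal
        = (((if x = 0 then s else 1 : ℝ)).toNNReal * ‖((-a : ℝ) : ℂ) ^ x.natAbs‖₊ ^ 2 : NNReal) := by
      intro x
      rw [ENNReal.coe_mul, ENNReal.coe_pow, ENNReal.toReal_ofNat,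
        ← ENNReal.rpow_natCast (‖((-a : ℝ) : ℂ) ^ x.natAbs‖₊ : ENNReal) 2]
      norm_num
    simp only [hterm]
    rw [lt_top_iff_ne_top, ENNReal.tsum_coe_ne_top_iff_summable]
    rw [← NNReal.summable_coe]
    apply Summable.of_nonneg_of_le (fun x => by positivity)
      (f := fun x : ℤ => (a^2) ^ x.natAbs)
    · intro x
      push_cast
      rw [norm_pow, norm_neg, Complex.norm_real, Real.norm_eq_abs,
        abs_of_nonneg ha0, Real.coe_toNNReal']
      have h1 : ((if x = 0 then s else 1) ⊔ 0) ≤ 1 := by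
        split <;> simp [hs1.le]
      have h2 : (a ^ x.natAbs) ^ 2 = (a ^ 2) ^ x.natAbs := by
        rw [← pow_mul, mul_comm, pow_mul]
      rw [h2]
      nlinarith [pow_nonneg (by positivity : (0:ℝ) ≤ a^2) x.natAbs]
    · apply Summable.of_nat_of_neg <;>
      · simp only [Int.natAbs_natCast, Int.natAbs_neg]
        exact summable_geometric_of_lt_one (by positivity) (by nlinarith)

/-- `λ_s = 4/(s(2-s))` is an eigenvalue of the Laplacian `Δ_s` of `ℤ` with unit edge
weights and vertex weight `s` at `0`, `1` elsewhere. -/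
theorem eigenvalue_weighted_Z_laplacian
    (s : ℝ) (hs : s ∈ Set.Ioo (0 : ℝ) 1)
    (T : Lp ℂ 2 (wMeasure (mW s)) →L[ℂ] Lp ℂ 2 (wMeasure (mW s)))
    (hsa : IsSelfAdjoint T)
    (hT : ∀ f : Lp ℂ 2 (wMeasure (mW s)),
      (T f : ℤ → ℂ) =ᵐ[wMeasure (mW s)]
        fun x => ((mW s x : ℂ))⁻¹ * (2 * f x - f (x - 1) - f (x + 1))) :
    ∃ f : Lp ℂ 2 (wMeasure (mW s)), f ≠ 0 ∧
      T f = ((4 / (s * (2 - s)) : ℝ) : ℂ) • f := by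
  obtain ⟨hs0, hs1⟩ := hs
  have h2s : (0:ℝ) < 2 - s := by linarith
  have hmpos : ∀ x : ℤ, 0 < mW s x := by
    intro x; unfold mW; split
    · exact hs0
    · norm_num
  set c : ℂ := ((-(s/(2-s)) : ℝ) : ℂ) with hc
  set lam : ℂ := ((4 / (s * (2 - s)) : ℝ) : ℂ) with hlam
  set g : ℤ → ℂ := fun x => c ^ x.natAbs with hgdef
  have hmem : MemLp g 2 (wMeasure (mW s)) := memLp_g s ⟨hs0, hs1⟩
  have hsC : (s:ℂ) ≠ 0 := by exact_mod_cast hs0.ne'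
  have h2sC : (2 - (s:ℂ)) ≠ 0 := by
    have h : ((2 - s : ℝ) : ℂ) ≠ 0 := by exact_mod_cast h2s.ne'
    push_cast at h; exact h
  have key : 2 * c - 1 - c^2 = lam * c := by
    rw [hc, hlam]
    push_cast
    field_simp
    ring
  have eqx : ∀ x : ℤ, x ≠ 0 →
      2 * c ^ x.natAbs - c ^ (x-1).natAbs - c ^ (x+1).natAbs = lam * c ^ x.natAbs := by
    intro x hx
    rcases lt_or_gt_of_ne hx with h|h
    · obtain ⟨m, rfl⟩ : ∃ m:ℕ, x = -(m+1) := ⟨(-x-1).toNat, by omega⟩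
      rw [show ((-((m:ℤ)+1)).natAbs) = m+1 by omega,
        show ((-((m:ℤ)+1)-1).natAbs) = m+2 by omega,
        show ((-((m:ℤ)+1)+1).natAbs) = m by omega]
      linear_combination c^m * key
    · obtain ⟨m, rfl⟩ : ∃ m:ℕ, x = (m:ℤ)+1 := ⟨(x-1).toNat, by omega⟩
      rw [show (((m:ℤ)+1).natAbs) = m+1 by omega,
        show (((m:ℤ)+1-1).natAbs) = m by omega,
        show (((m:ℤ)+1+1).natAbs) = m+2 by omega]
      linear_combination c^m * key
  have eq0 : (s:ℂ)⁻¹ * (2 - c - c) = lam := by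
    rw [hc, hlam]
    push_cast
    field_simp
    ring
  refine ⟨hmem.toLp g, ?_, ?_⟩
  · intro h0
    have h1 : (hmem.toLp g : ℤ → ℂ) =ᵐ[wMeasure (mW s)] 0 := by
      rw [h0]; exact Lp.coeFn_zero ℂ 2 (wMeasure (mW s))
    have h2 := wMeasure_forall (mW s) hmpos (hmem.coeFn_toLp.symm.trans h1) 0
    simp only [hgdef, Int.natAbs_zero, pow_zero, Pi.zero_apply] at h2
    exact one_ne_zero h2
  · have hfg : ∀ x, (hmem.toLp g : ℤ → ℂ) x = g x :=
      wMeasure_forall (mW s) hmpos hmem.coeFn_toLp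
    apply Lp.ext
    refine (hT (hmem.toLp g)).trans
      (Filter.EventuallyEq.trans ?_ (Lp.coeFn_smul lam (hmem.toLp g)).symm)
    apply Filter.Eventually.of_forall
    intro x
    simp only [Pi.smul_apply, smul_eq_mul, hfg x, hfg (x-1), hfg (x+1)]
    simp only [hgdef]
    by_cases hx : x = 0
    · subst hx
      rw [show ((0:ℤ)-1).natAbs = 1 by omega, show ((0:ℤ)+1).natAbs = 1 by omega,
        Int.natAbs_zero, pow_zero, pow_one, mul_one]
      have hm0 : mW s 0 = s := by simp [mW]
      rw [hm0, ← eq0]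
      ring
    · have hm1 : mW s x = 1 := by simp [mW, hx]
      rw [hm1]
      norm_num
      exact eqx x hx
end
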